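/- Let r ≥ 1 and let f: {0,1}^r → {0,1} satisfy Pr_{x uniform}[f(x) ≠ PAR_r(x)] = η. Then for all δ ∈ [0,1]: NS_{1−2δ}(f) ≤ (1−2η)²·(1−2δ)^r + 4η(1−η). -/

import Mathlib

/-- Hamming weight of a point of the Boolean cube. -/
def wt {n : ℕ} (x : Fin n → Bool) : ℕ :=
  (Finset.univ.filter (fun i => x i = true)).card

/-- Noise stability `NS_η(f) = 1 - 2 Pr[f(x) ≠ f(y)]` where `x` is uniform and `y` is
`η`-correlated with `x`: here `z` records which coordinates are flipped, each coordinate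
being flipped independently with probability `(1 - η)/2`. -/
noncomputable def noiseStability {n : ℕ} (η : ℝ) (f : (Fin n → Bool) → Bool) : ℝ :=
  1 - 2 * ∑ x : Fin n → Bool, ∑ z : Fin n → Bool,
      ((2 ^ n : ℝ))⁻¹ * (∏ i : Fin n, if z i then (1 - η) / 2 else (1 + η) / 2) *
        (if f x ≠ f (fun i => xor (x i) (z i)) then 1 else 0)

/-- `PAR_r(x) = x_1 ⊕ ⋯ ⊕ x_r`: parity of the Hamming weight. -/
def parityFn {r : ℕ} (x : Fin r → Bool) : Bool := decide (Odd (wt x))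


namespace Stmt15Aux

variable {r : ℕ}

lemma sum_prod_pi (g : Fin r → Bool → ℝ) :
    ∑ z : Fin r → Bool, ∏ i, g i (z i) = ∏ i, (g i false + g i true) := by
  rw [← Fintype.prod_sum g]
  exact Finset.prod_congr rfl fun i _ => by rw [Fintype.sum_bool]; ring

/-- Characters of the Boolean cube. -/
def chi (S x : Fin r → Bool) : ℝ := ∏ i, if S i && x i then -1 else 1

lemma chi_mul (S x y : Fin r → Bool) :
    chi S x * chi S y = chi S (fun i => xor (x i) (y i)) := by
  unfold chi
  rw [← Finset.prod_mul_distrib]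
  refine Finset.prod_congr rfl fun i _ => ?_
  cases hS : S i <;> cases hx : x i <;> cases hy : y i <;> simp [hx, hy]

lemma sum_chi (u : Fin r → Bool) :
    ∑ S : Fin r → Bool, chi S u = if u = (fun _ => false) then (2 ^ r : ℝ) else 0 := by
  unfold chi
  rw [sum_prod_pi (fun i b => if b && u i then -1 else 1)]
  by_cases h : u = fun _ => false
  · subst h; norm_num
  · rw [if_neg h]
    obtain ⟨i, hi⟩ : ∃ i, u i = true := by
      by_contra hc
      push_neg at hc
      exact h (funext fun i => by simpa using hc i)
    exact Finset.prod_eq_zero (Finset.mem_univ i) (by simp [hi])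

lemma xor_eq_false_iff (y x : Fin r → Bool) :
    ((fun i => xor (y i) (x i)) = fun _ => false) ↔ y = x := by
  constructor
  · intro h; funext i; have := congrFun h i; simpa using this
  · intro h; subst h; funext i; simp

lemma inversion (G : (Fin r → Bool) → ℝ) (x : Fin r → Bool) :
    ∑ S : Fin r → Bool, (∑ y, G y * chi S y) * chi S x = 2 ^ r * G x := by
  have h1 : ∀ S : Fin r → Bool, (∑ y, G y * chi S y) * chi S x
      = ∑ y, G y * chi S (fun i => xor (y i) (x i)) := by
    intro S; rw [Finset.sum_mul]
    exact Finset.sum_congr rfl fun y _ => by rw [mul_assoc, chi_mul]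
  simp_rw [h1]
  rw [Finset.sum_comm]
  have h2 : ∀ y : Fin r → Bool, ∑ S : Fin r → Bool, G y * chi S (fun i => xor (y i) (x i))
      = G y * (if y = x then (2 ^ r : ℝ) else 0) := by
    intro y; rw [← Finset.mul_sum, sum_chi]; simp only [xor_eq_false_iff]
  simp_rw [h2, mul_ite, mul_zero, Finset.sum_ite_eq' Finset.univ x, Finset.mem_univ, if_true,
    mul_comm]

lemma parseval (G : (Fin r → Bool) → ℝ) :
    ∑ S : Fin r → Bool, (∑ y, G y * chi S y) ^ 2 = 2 ^ r * ∑ x, (G x) ^ 2 := by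
  have h1 : ∀ S : Fin r → Bool, (∑ y, G y * chi S y) ^ 2
      = ∑ x, ∑ y, G x * G y * chi S (fun i => xor (x i) (y i)) := by
    intro S
    rw [sq, Finset.sum_mul_sum]
    refine Finset.sum_congr rfl fun x _ => Finset.sum_congr rfl fun y _ => ?_
    rw [← chi_mul]; ring
  simp_rw [h1]
  rw [Finset.sum_comm]
  have h2 : ∀ x : Fin r → Bool, ∑ S : Fin r → Bool, ∑ y : Fin r → Bool,
      G x * G y * chi S (fun i => xor (x i) (y i))
      = 2 ^ r * (G x) ^ 2 := by
    intro x
    rw [Finset.sum_comm]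
    have h3 : ∀ y : Fin r → Bool, ∑ S : Fin r → Bool, G x * G y * chi S (fun i => xor (x i) (y i))
        = G x * G y * (if x = y then (2 ^ r : ℝ) else 0) := by
      intro y; rw [← Finset.mul_sum, sum_chi]; simp only [xor_eq_false_iff]
    simp_rw [h3, mul_ite, mul_zero, Finset.sum_ite_eq Finset.univ x, Finset.mem_univ, if_true]
    ring
  simp_rw [h2]
  rw [← Finset.mul_sum]

def sgn (f : (Fin r → Bool) → Bool) (x : Fin r → Bool) : ℝ := if f x then -1 else 1

lemma sgn_sq (f : (Fin r → Bool) → Bool) (x : Fin r → Bool) : sgn f x ^ 2 = 1 := by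
  unfold sgn; by_cases h : f x <;> simp [h]

lemma ind_eq (f : (Fin r → Bool) → Bool) (x y : Fin r → Bool) :
    (if f x ≠ f y then (1:ℝ) else 0) = (1 - sgn f x * sgn f y) / 2 := by
  unfold sgn
  by_cases hx : f x <;> by_cases hy : f y <;> simp [hx, hy]

def coeff (f : (Fin r → Bool) → Bool) (S : Fin r → Bool) : ℝ := ∑ y, sgn f y * chi S y

lemma card_cube : (Fintype.card (Fin r → Bool) : ℝ) = 2 ^ r := by
  simp [Fintype.card_fun]

/-- convolution identity -/
lemma conv (f : (Fin r → Bool) → Bool) (z : Fin r → Bool) :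
    ∑ x : Fin r → Bool, sgn f x * sgn f (fun i => xor (x i) (z i))
      = (2 ^ r : ℝ)⁻¹ * ∑ S : Fin r → Bool, coeff f S ^ 2 * chi S z := by
  have hN : (2 ^ r : ℝ) ≠ 0 := by positivity
  have hinv : ∀ y : Fin r → Bool, sgn f y = (2 ^ r : ℝ)⁻¹ * ∑ S, coeff f S * chi S y := by
    intro y
    have := inversion (sgn f) y
    unfold coeff
    field_simp
    linarith [this]
  calc ∑ x : Fin r → Bool, sgn f x * sgn f (fun i => xor (x i) (z i))
      = ∑ x : Fin r → Bool, (2 ^ r : ℝ)⁻¹ * ∑ S, (coeff f S * chi S z) * (sgn f x * chi S x) := by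
        refine Finset.sum_congr rfl fun x _ => ?_
        rw [hinv (fun i => xor (x i) (z i))]
        rw [Finset.mul_sum, Finset.mul_sum, Finset.mul_sum]
        refine Finset.sum_congr rfl fun S _ => ?_
        rw [← chi_mul]
        ring
    _ = (2 ^ r : ℝ)⁻¹ * ∑ S, (coeff f S * chi S z) * ∑ x, sgn f x * chi S x := by
        rw [← Finset.mul_sum]
        congr 1
        rw [Finset.sum_comm]
        exact Finset.sum_congr rfl fun S _ => (Finset.mul_sum _ _ _).symm
    _ = (2 ^ r : ℝ)⁻¹ * ∑ S : Fin r → Bool, coeff f S ^ 2 * chi S z := by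
        congr 1
        refine Finset.sum_congr rfl fun S _ => ?_
        unfold coeff
        ring

/-- the full character is the parity sign -/
lemma chi_top (x : Fin r → Bool) :
    chi (fun _ => true) x = if parityFn x then -1 else 1 := by
  unfold chi parityFn wt
  have h1 : ∀ i : Fin r, (if (fun _ => true) i && x i then (-1:ℝ) else 1)
      = if x i = true then (-1:ℝ) else 1 := by intro i; simp
  rw [Finset.prod_congr rfl fun i _ => h1 i, Finset.prod_ite, Finset.prod_const,
    Finset.prod_const, one_pow, mul_one]
  by_cases h : Odd (Finset.univ.filter (fun i => x i = true)).card
  · rw [h.neg_one_pow]; simp [h]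
  · rw [(Nat.not_odd_iff_even.mp h).neg_one_pow]; simp [h]


end Stmt15Aux

open Stmt15Aux

/-- If `f : {0,1}^r → {0,1}` disagrees with `PAR_r` with probability exactly `η`, then
for all `δ ∈ [0,1]`, `NS_{1-2δ}(f) ≤ (1-2η)² (1-2δ)^r + 4η(1-η)`. -/
theorem stmt15 (r : ℕ) (hr : 1 ≤ r) (f : (Fin r → Bool) → Bool) (η : ℝ)
    (hη : ((Finset.univ.filter (fun x : Fin r → Bool => f x ≠ parityFn x)).card : ℝ) / 2 ^ r
      = η)
    (δ : ℝ) (h0 : 0 ≤ δ) (h1 : δ ≤ 1) :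
    noiseStability (1 - 2 * δ) f
      ≤ (1 - 2 * η) ^ 2 * (1 - 2 * δ) ^ r + 4 * η * (1 - η) := by
  classical
  have hN : (0:ℝ) < 2 ^ r := by positivity
  have hN' : (2 ^ r : ℝ) ≠ 0 := ne_of_gt hN
  set ρ : ℝ := 1 - 2 * δ with hρ
  set W : (Fin r → Bool) → ℝ := fun z => ∏ i, if z i then δ else 1 - δ with hW
  have hsumW : ∑ z : Fin r → Bool, W z = 1 := by
    rw [hW, sum_prod_pi (fun _ b => if b then δ else 1 - δ)]
    simp
  -- Step A
  have stepA : noiseStability (1 - 2 * δ) f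
      = (2 ^ r : ℝ)⁻¹ * ∑ z : Fin r → Bool, W z *
          ∑ x : Fin r → Bool, sgn f x * sgn f (fun i => xor (x i) (z i)) := by
    unfold noiseStability
    rw [Finset.sum_comm]
    have hz : ∀ z : Fin r → Bool,
        (∑ x : Fin r → Bool, (2 ^ r : ℝ)⁻¹ *
            (∏ i, if z i then (1 - (1 - 2 * δ)) / 2 else (1 + (1 - 2 * δ)) / 2) *
            (if f x ≠ f (fun i => xor (x i) (z i)) then (1:ℝ) else 0))
        = W z * (1 / 2) - (2 ^ r : ℝ)⁻¹ *
            (W z * ∑ x : Fin r → Bool, sgn f x * sgn f (fun i => xor (x i) (z i))) * (1 / 2) := by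
      intro z
      have hw : (∏ i : Fin r, if z i then (1 - (1 - 2 * δ)) / 2 else (1 + (1 - 2 * δ)) / 2)
          = W z := by
        refine Finset.prod_congr rfl fun i _ => ?_
        cases z i <;> norm_num <;> try ring
      simp_rw [hw, ind_eq, mul_assoc]
      rw [← Finset.mul_sum, ← Finset.mul_sum]
      have h2 : ∑ x : Fin r → Bool, (1 - sgn f x * sgn f (fun i => xor (x i) (z i))) / 2
          = (2 ^ r - ∑ x : Fin r → Bool, sgn f x * sgn f (fun i => xor (x i) (z i))) / 2 := by
        rw [← Finset.sum_div, Finset.sum_sub_distrib, Finset.sum_const, Finset.card_univ,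
          nsmul_eq_mul, mul_one]
        norm_num [Fintype.card_fun]
      rw [h2]
      field_simp
    rw [Finset.sum_congr rfl fun z _ => hz z, Finset.sum_sub_distrib, ← Finset.sum_mul, hsumW]
    rw [show (∑ z : Fin r → Bool, (2 ^ r : ℝ)⁻¹ *
        (W z * ∑ x : Fin r → Bool, sgn f x * sgn f (fun i => xor (x i) (z i))) * (1/2))
        = (2 ^ r : ℝ)⁻¹ * (∑ z : Fin r → Bool, W z *
            ∑ x : Fin r → Bool, sgn f x * sgn f (fun i => xor (x i) (z i))) * (1/2) by
      rw [← Finset.sum_mul, ← Finset.mul_sum]]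
    ring
  -- Step B : Fourier form
  have hWchi : ∀ S : Fin r → Bool, ∑ z : Fin r → Bool, W z * chi S z
      = ∏ i, (if S i then ρ else 1) := by
    intro S
    have h3 : ∀ z : Fin r → Bool, W z * chi S z
        = ∏ i, ((if z i then δ else 1 - δ) * (if S i && z i then -1 else 1)) := by
      intro z; rw [hW]; unfold chi; exact (Finset.prod_mul_distrib).symm
    simp_rw [h3]
    rw [sum_prod_pi (fun i b => (if b then δ else 1 - δ) * (if S i && b then -1 else 1))]
    refine Finset.prod_congr rfl fun i _ => ?_
    rw [hρ]
    cases S i <;> simp <;> try ring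
  have stepB : noiseStability (1 - 2 * δ) f
      = (2 ^ r : ℝ)⁻¹ * ((2 ^ r : ℝ)⁻¹ * ∑ S : Fin r → Bool,
          coeff f S ^ 2 * ∏ i, (if S i then ρ else 1)) := by
    rw [stepA]
    congr 1
    calc ∑ z : Fin r → Bool, W z * ∑ x : Fin r → Bool, sgn f x * sgn f (fun i => xor (x i) (z i))
        = ∑ z : Fin r → Bool, ∑ S : Fin r → Bool,
            (2 ^ r : ℝ)⁻¹ * (coeff f S ^ 2 * (W z * chi S z)) := by
          refine Finset.sum_congr rfl fun z _ => ?_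
          rw [conv f z, Finset.mul_sum, Finset.mul_sum]
          refine Finset.sum_congr rfl fun S _ => by ring
      _ = ∑ S : Fin r → Bool, ∑ z : Fin r → Bool,
            (2 ^ r : ℝ)⁻¹ * (coeff f S ^ 2 * (W z * chi S z)) := Finset.sum_comm
      _ = (2 ^ r : ℝ)⁻¹ * ∑ S : Fin r → Bool,
            coeff f S ^ 2 * ∏ i, (if S i then ρ else 1) := by
          rw [Finset.mul_sum]
          refine Finset.sum_congr rfl fun S _ => ?_
          rw [← hWchi S, Finset.mul_sum, Finset.mul_sum]
  -- the top coefficient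
  have hcard : ((Finset.univ.filter (fun x : Fin r → Bool => f x ≠ parityFn x)).card : ℝ)
      = η * 2 ^ r := by
    field_simp at hη; linarith [hη]
  have hcT : coeff f (fun _ => true) = 2 ^ r * (1 - 2 * η) := by
    unfold coeff
    have h4 : ∀ x : Fin r → Bool, sgn f x * chi (fun _ => true) x
        = 1 - 2 * (if f x ≠ parityFn x then (1:ℝ) else 0) := by
      intro x
      rw [chi_top]
      unfold sgn
      by_cases hx : f x <;> by_cases hp : parityFn x <;> simp [hx, hp] <;> try norm_num
    simp_rw [h4]
    rw [Finset.sum_sub_distrib, Finset.sum_const, Finset.card_univ, nsmul_eq_mul, mul_one,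
      ← Finset.mul_sum, Finset.sum_boole, hcard]
    norm_num [Fintype.card_fun]
    ring
  have hpars : ∑ S : Fin r → Bool, coeff f S ^ 2 = 2 ^ r * 2 ^ r := by
    have hp := parseval (sgn f)
    simp_rw [sgn_sq] at hp
    rw [Finset.sum_const, Finset.card_univ, nsmul_eq_mul, mul_one] at hp
    unfold coeff
    rw [hp]
    norm_num [Fintype.card_fun]
  -- bounding the products
  have habs : ∀ S : Fin r → Bool, |∏ i, (if S i then ρ else 1)| ≤ 1 := by
    intro S
    rw [Finset.abs_prod]
    refine Finset.prod_le_one (fun i _ => abs_nonneg _) (fun i _ => ?_)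
    cases S i
    · simp
    · simp only [if_true]
      rw [hρ]
      exact abs_le.mpr ⟨by linarith, by linarith⟩
  -- split off the top set
  have hsplit : ∑ S : Fin r → Bool, coeff f S ^ 2 * ∏ i, (if S i then ρ else 1)
      = coeff f (fun _ => true) ^ 2 * ρ ^ r +
        ∑ S ∈ Finset.univ.erase (fun _ => true),
          coeff f S ^ 2 * ∏ i, (if S i then ρ else 1) := by
    rw [← Finset.add_sum_erase Finset.univ _ (Finset.mem_univ (fun _ => true))]
    congr 2
    simp
  have hrest : ∑ S ∈ Finset.univ.erase (fun _ => true),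
        coeff f S ^ 2 * ∏ i, (if S i then ρ else 1)
      ≤ 2 ^ r * 2 ^ r - coeff f (fun _ => true) ^ 2 := by
    calc ∑ S ∈ Finset.univ.erase (fun _ => true),
          coeff f S ^ 2 * ∏ i, (if S i then ρ else 1)
        ≤ ∑ S ∈ Finset.univ.erase (fun _ => true), coeff f S ^ 2 := by
          refine Finset.sum_le_sum fun S _ => ?_
          calc coeff f S ^ 2 * ∏ i, (if S i then ρ else 1)
              ≤ coeff f S ^ 2 * |∏ i, (if S i then ρ else 1)| :=
                mul_le_mul_of_nonneg_left (le_abs_self _) (sq_nonneg _)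
            _ ≤ coeff f S ^ 2 * 1 := mul_le_mul_of_nonneg_left (habs S) (sq_nonneg _)
            _ = coeff f S ^ 2 := mul_one _
      _ = (∑ S : Fin r → Bool, coeff f S ^ 2) - coeff f (fun _ => true) ^ 2 := by
          rw [← Finset.add_sum_erase Finset.univ _ (Finset.mem_univ (fun _ => true))]
          ring
      _ = 2 ^ r * 2 ^ r - coeff f (fun _ => true) ^ 2 := by rw [hpars]
  -- conclude
  rw [stepB, hsplit]
  have key : (2 ^ r : ℝ)⁻¹ * ((2 ^ r : ℝ)⁻¹ *
      (coeff f (fun _ => true) ^ 2 * ρ ^ r + (2 ^ r * 2 ^ r - coeff f (fun _ => true) ^ 2)))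
      = (1 - 2 * η) ^ 2 * ρ ^ r + 4 * η * (1 - η) := by
    rw [hcT]
    field_simp
    ring
  calc (2 ^ r : ℝ)⁻¹ * ((2 ^ r : ℝ)⁻¹ *
        (coeff f (fun _ => true) ^ 2 * ρ ^ r +
          ∑ S ∈ Finset.univ.erase (fun _ => true),
            coeff f S ^ 2 * ∏ i, (if S i then ρ else 1)))
      ≤ (2 ^ r : ℝ)⁻¹ * ((2 ^ r : ℝ)⁻¹ *
        (coeff f (fun _ => true) ^ 2 * ρ ^ r + (2 ^ r * 2 ^ r - coeff f (fun _ => true) ^ 2))) := by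
        apply mul_le_mul_of_nonneg_left _ (by positivity)
        apply mul_le_mul_of_nonneg_left _ (by positivity)
        exact add_le_add_right hrest _
    _ = (1 - 2 * η) ^ 2 * ρ ^ r + 4 * η * (1 - η) := key
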